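/- Let K be a finite-dimensional Hilbert space, K a self-adjoint operator on it, h a finite-dimensional Hilbert space, Y self-adjoint on h, and ν ∈ B(K, K ⊗ h) satisfying the intertwining relation ν K = (K ⊗ 1 + 1 ⊗ Y) ν. Then M(A) := −½{ν*ν, A} + ν*(A ⊗ 1)ν generates a K-invariant purely dissipative Markov completely positive semigroup on B(K); in particular ν*ν commutes with K and M(e^{itK} A e^{-itK}) = e^{itK} M(A) e^{-itK} for all t. -/

import Mathlib

open Matrix ComplexConjugate MeasureTheory
open scoped Kronecker ComplexOrder

noncomputable section

/-- Ampliation `Φ ⊗ id_k` of a superoperator, acting on `B(K ⊗ ℂᵏ)`. -/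
def amp {n m k : Type*} [Fintype n] [Fintype m] [Fintype k]
    (Φ : Matrix n n ℂ → Matrix m m ℂ) :
    Matrix (n × k) (n × k) ℂ → Matrix (m × k) (m × k) ℂ :=
  fun M => Matrix.of fun p q => Φ (Matrix.of fun a b => M (a, p.2) (b, q.2)) p.1 q.1

/-- A map between matrix algebras is positive if it preserves positive semidefiniteness. -/
def IsPosMap {n m : Type*} [Fintype n] [Fintype m]
    (Φ : Matrix n n ℂ → Matrix m m ℂ) : Prop :=
  ∀ A : Matrix n n ℂ, A.PosSemidef → (Φ A).PosSemidef

/-- Complete positivity: all ampliations `Φ ⊗ id_k` are positive. -/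
def IsCP {n m : Type*} [Fintype n] [Fintype m]
    (Φ : Matrix n n ℂ → Matrix m m ℂ) : Prop :=
  ∀ k : ℕ, IsPosMap (amp (k := Fin k) Φ)

/-- Action of a supermatrix (matrix on index `n × n`) as a linear map on `B(ℂⁿ)`. -/
def supAct {n : Type*} [Fintype n]
    (L : Matrix (n × n) (n × n) ℂ) (A : Matrix n n ℂ) : Matrix n n ℂ :=
  Matrix.of fun i j => ∑ p : n × n, L (i, j) p * A p.1 p.2

/-- The standard (antilinear in the first slot) inner product on `ι → ℂ`. -/
def cinner {ι : Type*} [Fintype ι] (v w : ι → ℂ) : ℂ := ∑ i, conj (v i) * w i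

/-- Elementary tensor of two vectors. -/
def tvec {n d : Type*} (φ : n → ℂ) (w : d → ℂ) : n × d → ℂ := fun p => φ p.1 * w p.2

/-- Contraction `(φ| ⊗ 1 : K ⊗ h → h`. -/
def contrL {n d : Type*} [Fintype n] (φ : n → ℂ) (x : n × d → ℂ) : d → ℂ :=
  fun a => ∑ i, conj (φ i) * x (i, a)

/-- Partial trace over the second tensor factor. -/
def ptr {n d : Type*} [Fintype d] (M : Matrix (n × d) (n × d) ℂ) : Matrix n n ℂ :=
  Matrix.of fun i j => ∑ a, M (i, a) (j, a)

namespace LindbladAux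
open Filter Topology NormedSpace

attribute [local instance] Matrix.linftyOpNormedAddCommGroup Matrix.linftyOpNormedSpace
  Matrix.linftyOpNormedRing Matrix.linftyOpNormedAlgebra

set_option linter.unusedSectionVars false

variable {N D k : Type*} [Fintype N] [DecidableEq N] [Fintype D] [DecidableEq D]
  [Fintype k] [DecidableEq k]

lemma supAct_apply (L : Matrix (N × N) (N × N) ℂ) (A : Matrix N N ℂ) (i j : N) :
    supAct L A i j = ∑ p : N × N, L (i, j) p * A p.1 p.2 := rfl

@[simp] lemma supAct_one (A : Matrix N N ℂ) : supAct (1 : Matrix (N × N) (N × N) ℂ) A = A := by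
  ext i j
  simp [supAct_apply, Matrix.one_apply]

@[simp] lemma supAct_zero_right (L : Matrix (N × N) (N × N) ℂ) : supAct L 0 = 0 := by
  ext i j; simp [supAct_apply]

lemma supAct_mul (L M : Matrix (N × N) (N × N) ℂ) (A : Matrix N N ℂ) :
    supAct (L * M) A = supAct L (supAct M A) := by
  ext i j
  simp only [supAct_apply, Matrix.mul_apply, Finset.sum_mul, Finset.mul_sum]
  rw [Finset.sum_comm]
  refine Finset.sum_congr rfl fun z _ => Finset.sum_congr rfl fun p _ => by ring

lemma supAct_add_left (L M : Matrix (N × N) (N × N) ℂ) (A : Matrix N N ℂ) :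
    supAct (L + M) A = supAct L A + supAct M A := by
  ext i j; simp [supAct_apply, add_mul, Finset.sum_add_distrib]

lemma supAct_smul_left (c : ℂ) (L : Matrix (N × N) (N × N) ℂ) (A : Matrix N N ℂ) :
    supAct (c • L) A = c • supAct L A := by
  ext i j; simp [supAct_apply, Finset.mul_sum, mul_assoc]

lemma supAct_ext {L M : Matrix (N × N) (N × N) ℂ}
    (h : ∀ A, supAct L A = supAct M A) : L = M := by
  ext ⟨i, j⟩ ⟨p, q⟩
  have := congrFun (congrFun (h (Matrix.single p q 1)) i) j
  simpa [supAct_apply, Matrix.single, Fintype.sum_prod_type, Matrix.of_apply,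
    ite_and, Finset.sum_ite_eq, Finset.sum_ite_eq'] using this

lemma supAct_kron (B C : Matrix N N ℂ) (A : Matrix N N ℂ) :
    supAct (B ⊗ₖ Cᵀ) A = B * A * C := by
  ext i j
  simp only [supAct_apply, Matrix.mul_apply, kroneckerMap_apply, transpose_apply,
    Fintype.sum_prod_type, Finset.sum_mul]
  conv_lhs => rw [Finset.sum_comm]
  refine Finset.sum_congr rfl fun q _ => Finset.sum_congr rfl fun p _ => by ring


/-- `supAct · A` as a linear map in the supermatrix. -/
def evalLM (A : Matrix N N ℂ) : Matrix (N × N) (N × N) ℂ →ₗ[ℂ] Matrix N N ℂ where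
  toFun L := supAct L A
  map_add' L M := supAct_add_left L M A
  map_smul' c L := supAct_smul_left c L A

def evalCLM (A : Matrix N N ℂ) : Matrix (N × N) (N × N) ℂ →L[ℂ] Matrix N N ℂ :=
  LinearMap.toContinuousLinearMap (evalLM A)

@[simp] lemma evalCLM_apply (A : Matrix N N ℂ) (L : Matrix (N × N) (N × N) ℂ) :
    evalCLM A L = supAct L A := rfl

/-- Push a linear map commuting with powers through the exponential. -/
lemma map_exp_pow {α β : Type*} [Fintype α] [DecidableEq α] [Fintype β] [DecidableEq β]
    (f : Matrix α α ℂ →ₗ[ℂ] Matrix β β ℂ) (x : Matrix α α ℂ)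
    (h : ∀ m : ℕ, f (x ^ m) = (f x) ^ m) :
    f (exp x) = exp (f x) := by
  have hs : Summable fun m : ℕ => ((m.factorial : ℂ))⁻¹ • x ^ m :=
    expSeries_summable' (𝕂 := ℂ) x
  rw [exp_eq_tsum (𝕂 := ℂ), exp_eq_tsum (𝕂 := ℂ)]
  calc f (∑' m : ℕ, ((m.factorial : ℂ))⁻¹ • x ^ m)
      = ∑' m : ℕ, f (((m.factorial : ℂ))⁻¹ • x ^ m) :=
        ContinuousLinearMap.map_tsum (LinearMap.toContinuousLinearMap f) hs
    _ = ∑' m : ℕ, ((m.factorial : ℂ))⁻¹ • (f x) ^ m := by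
        simp only [_root_.map_smul, h]

/-- Rectangular intertwining relation propagates to exponentials. -/
lemma mul_exp_of_intertwine {a b : Type*} [Fintype a] [DecidableEq a] [Fintype b] [DecidableEq b]
    (V : Matrix a b ℂ) (X : Matrix b b ℂ) (H : Matrix a a ℂ) (h : V * X = H * V) :
    V * exp X = exp H * V := by
  have hn : ∀ m : ℕ, V * X ^ m = H ^ m * V := by
    intro m
    induction m with
    | zero => simp
    | succ m ih =>
        rw [pow_succ, ← Matrix.mul_assoc, ih, Matrix.mul_assoc, h, ← Matrix.mul_assoc,
          ← pow_succ]
  have hsX : Summable fun m : ℕ => ((m.factorial : ℂ))⁻¹ • X ^ m :=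
    expSeries_summable' (𝕂 := ℂ) X
  have hsH : Summable fun m : ℕ => ((m.factorial : ℂ))⁻¹ • H ^ m :=
    expSeries_summable' (𝕂 := ℂ) H
  let fV : Matrix b b ℂ →ₗ[ℂ] Matrix a b ℂ :=
    { toFun := fun M => V * M
      map_add' := fun M M' => Matrix.mul_add V M M'
      map_smul' := fun c M => (Matrix.mul_smul V c M) }
  let gV : Matrix a a ℂ →ₗ[ℂ] Matrix a b ℂ :=
    { toFun := fun M => M * V
      map_add' := fun M M' => Matrix.add_mul M M' V
      map_smul' := fun c M => (Matrix.smul_mul c M V) }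
  rw [exp_eq_tsum (𝕂 := ℂ), exp_eq_tsum (𝕂 := ℂ)]
  calc V * (∑' m : ℕ, ((m.factorial : ℂ))⁻¹ • X ^ m)
      = ∑' m : ℕ, ((m.factorial : ℂ))⁻¹ • (V * X ^ m) :=
        (ContinuousLinearMap.map_tsum (LinearMap.toContinuousLinearMap fV) hsX).trans
          (tsum_congr fun m => by rw [_root_.map_smul]; rfl)
    _ = ∑' m : ℕ, ((m.factorial : ℂ))⁻¹ • (H ^ m * V) := by simp only [hn]
    _ = (∑' m : ℕ, ((m.factorial : ℂ))⁻¹ • H ^ m) * V :=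
        ((ContinuousLinearMap.map_tsum (LinearMap.toContinuousLinearMap gV) hsH).trans
          (tsum_congr fun m => by rw [_root_.map_smul]; rfl)).symm

/-- `M ↦ M ⊗ₖ 1` as a linear map. -/
def koL (D : Type*) [Fintype D] [DecidableEq D] :
    Matrix N N ℂ →ₗ[ℂ] Matrix (N × D) (N × D) ℂ where
  toFun M := M ⊗ₖ (1 : Matrix D D ℂ)
  map_add' M M' := Matrix.add_kronecker M M' 1
  map_smul' c M := Matrix.smul_kronecker c M 1

/-- `M ↦ 1 ⊗ₖ M` as a linear map. -/
def okL (N : Type*) [Fintype N] [DecidableEq N] {D : Type*} [Fintype D] [DecidableEq D] :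
    Matrix D D ℂ →ₗ[ℂ] Matrix (N × D) (N × D) ℂ where
  toFun M := (1 : Matrix N N ℂ) ⊗ₖ M
  map_add' M M' := Matrix.kronecker_add 1 M M'
  map_smul' c M := Matrix.kronecker_smul c 1 M

lemma koL_pow (M : Matrix N N ℂ) (m : ℕ) :
    koL D (M ^ m) = (koL D M) ^ m := by
  induction m with
  | zero => simp [koL, Matrix.one_kronecker_one]
  | succ m ih =>
      simp only [koL, LinearMap.coe_mk, AddHom.coe_mk] at ih ⊢
      rw [pow_succ, pow_succ, ← ih, ← Matrix.mul_kronecker_mul, Matrix.one_mul]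

lemma okL_pow (M : Matrix D D ℂ) (m : ℕ) :
    okL N (M ^ m) = (okL N M) ^ m := by
  induction m with
  | zero => simp [okL, Matrix.one_kronecker_one]
  | succ m ih =>
      simp only [okL, LinearMap.coe_mk, AddHom.coe_mk] at ih ⊢
      rw [pow_succ, pow_succ, ← ih, ← Matrix.mul_kronecker_mul, Matrix.one_mul]

lemma exp_kron_one (M : Matrix N N ℂ) :
    exp (M ⊗ₖ (1 : Matrix D D ℂ)) = exp M ⊗ₖ (1 : Matrix D D ℂ) :=
  (map_exp_pow (koL D) M (koL_pow M)).symm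

lemma exp_one_kron (M : Matrix D D ℂ) :
    exp ((1 : Matrix N N ℂ) ⊗ₖ M) = (1 : Matrix N N ℂ) ⊗ₖ exp M :=
  (map_exp_pow (okL N) M (okL_pow M)).symm

lemma commute_kron (B : Matrix N N ℂ) (C : Matrix D D ℂ) :
    Commute (B ⊗ₖ (1 : Matrix D D ℂ)) ((1 : Matrix N N ℂ) ⊗ₖ C) := by
  unfold Commute SemiconjBy
  rw [← Matrix.mul_kronecker_mul, ← Matrix.mul_kronecker_mul, Matrix.one_mul, Matrix.mul_one,
    Matrix.one_mul, Matrix.mul_one]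

lemma exp_kron_add (B : Matrix N N ℂ) (C : Matrix D D ℂ) :
    exp (B ⊗ₖ (1 : Matrix D D ℂ) + (1 : Matrix N N ℂ) ⊗ₖ C)
      = exp B ⊗ₖ exp C := by
  rw [Matrix.exp_add_of_commute _ _ (commute_kron B C), exp_kron_one, exp_one_kron,
    ← Matrix.mul_kronecker_mul, Matrix.mul_one, Matrix.one_mul]


lemma complex_nonneg_of_tendsto {ι : Type*} {l : Filter ι} [l.NeBot] {g : ι → ℂ} {z : ℂ}
    (hg : Tendsto g l (𝓝 z)) (h : ∀ᶠ i in l, 0 ≤ g i) : 0 ≤ z := by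
  have hre : Tendsto (fun i => (g i).re) l (𝓝 z.re) := (Complex.continuous_re.tendsto z).comp hg
  have him : Tendsto (fun i => (g i).im) l (𝓝 z.im) := (Complex.continuous_im.tendsto z).comp hg
  rw [Complex.le_def]
  constructor
  · exact ge_of_tendsto hre (h.mono fun i hi => (Complex.le_def.mp hi).1)
  · have : Tendsto (fun _ : ι => (0 : ℂ).im) l (𝓝 z.im) :=
      him.congr' (h.mono fun i hi => ((Complex.le_def.mp hi).2).symm) |>.congr
        (fun _ => rfl)
    exact tendsto_nhds_unique tendsto_const_nhds this

lemma posSemidef_of_tendsto {ι : Type*} {l : Filter ι} [l.NeBot]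
    {f : ι → Matrix N N ℂ} {A : Matrix N N ℂ}
    (hf : Tendsto f l (𝓝 A)) (h : ∀ᶠ i in l, (f i).PosSemidef) : A.PosSemidef := by
  have hentry : ∀ i j, Tendsto (fun s => f s i j) l (𝓝 (A i j)) := by
    intro i j
    have hc : Continuous fun M : Matrix N N ℂ => M i j :=
      (continuous_apply j).comp (continuous_apply i)
    exact (hc.tendsto A).comp hf
  refine Matrix.PosSemidef.of_dotProduct_mulVec_nonneg ?_ ?_
  · ext i j
    rw [Matrix.conjTranspose_apply]
    have h1 : Tendsto (fun s => star (f s j i)) l (𝓝 (star (A j i))) :=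
      (continuous_star.tendsto (A j i)).comp (hentry j i)
    have h2 : Tendsto (fun s => star (f s j i)) l (𝓝 (A i j)) :=
      (hentry i j).congr' (h.mono fun s hs => (hs.isHermitian.apply i j).symm)
    exact tendsto_nhds_unique h1 h2
  · intro x
    have hq : Tendsto (fun s => star x ⬝ᵥ (f s) *ᵥ x) l (𝓝 (star x ⬝ᵥ A *ᵥ x)) := by
      have hc : Continuous fun M : Matrix N N ℂ => star x ⬝ᵥ M *ᵥ x := by
        simp only [dotProduct, Matrix.mulVec]
        refine continuous_finset_sum _ fun i _ => Continuous.mul continuous_const ?_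
        refine continuous_finset_sum _ fun j _ => Continuous.mul ?_ continuous_const
        exact (continuous_apply j).comp (continuous_apply i)
      exact (hc.tendsto A).comp hf
    exact complex_nonneg_of_tendsto hq (h.mono fun s hs => hs.dotProduct_mulVec_nonneg x)

lemma posSemidef_smul_real {c : ℝ} (hc : 0 ≤ c) {A : Matrix N N ℂ} (hA : A.PosSemidef) :
    ((c : ℂ) • A).PosSemidef := by
  refine Matrix.PosSemidef.of_dotProduct_mulVec_nonneg ?_ ?_
  · have : ((c : ℂ) • A)ᴴ = star (c : ℂ) • Aᴴ := Matrix.conjTranspose_smul (c : ℂ) A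
    rw [Matrix.IsHermitian, this, hA.1, Complex.star_def, Complex.conj_ofReal]
  · intro x
    rw [Matrix.smul_mulVec, dotProduct_smul]
    exact mul_nonneg (Complex.zero_le_real.mpr hc) (hA.dotProduct_mulVec_nonneg x)

lemma posSemidef_sum {ι : Type*} (s : Finset ι) (f : ι → Matrix N N ℂ)
    (h : ∀ i ∈ s, (f i).PosSemidef) : (∑ i ∈ s, f i).PosSemidef :=
  Finset.sum_induction f _ (fun _ _ ha hb => ha.add hb) Matrix.PosSemidef.zero h

lemma posSemidef_hasSum {f : ℕ → Matrix N N ℂ} {S : Matrix N N ℂ}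
    (hf : HasSum f S) (h : ∀ m, (f m).PosSemidef) : S.PosSemidef :=
  posSemidef_of_tendsto hf (Filter.Eventually.of_forall fun s =>
    posSemidef_sum s f fun i _ => h i)

lemma kron_conjTranspose {a b c d : Type*} [Fintype a] [Fintype b] [Fintype c] [Fintype d]
    (A : Matrix a b ℂ) (B : Matrix c d ℂ) : (A ⊗ₖ B)ᴴ = Aᴴ ⊗ₖ Bᴴ := by
  ext ⟨i, x⟩ ⟨j, y⟩
  simp [Matrix.conjTranspose_apply, Matrix.kroneckerMap_apply, star_mul']

lemma posSemidef_kron_one {A : Matrix N N ℂ} (hA : A.PosSemidef) :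
    (A ⊗ₖ (1 : Matrix D D ℂ)).PosSemidef := by
  exact hA.kronecker Matrix.PosSemidef.one


/-- The dissipation matrix `G = -(1/2) W† W`. -/
def gM (W : Matrix (N × D) N ℂ) : Matrix N N ℂ := -(1 / 2 : ℂ) • (Wᴴ * W)

/-- Supermatrix of `A ↦ W† (A ⊗ 1) W`. -/
def phiM (W : Matrix (N × D) N ℂ) : Matrix (N × N) (N × N) ℂ :=
  Matrix.of fun ij pq => ∑ a : D, star (W (pq.1, a) ij.1) * W (pq.2, a) ij.2

/-- The Lindblad supermatrix. -/
def lmat (W : Matrix (N × D) N ℂ) : Matrix (N × N) (N × N) ℂ :=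
  gM W ⊗ₖ (1 : Matrix N N ℂ) + (1 : Matrix N N ℂ) ⊗ₖ (gM W)ᵀ + phiM W

lemma supAct_phiM (W : Matrix (N × D) N ℂ) (A : Matrix N N ℂ) :
    supAct (phiM W) A = Wᴴ * (A ⊗ₖ (1 : Matrix D D ℂ)) * W := by
  ext i j
  simp only [supAct_apply, phiM, Matrix.of_apply, Matrix.mul_apply,
    Matrix.conjTranspose_apply, Matrix.kroneckerMap_apply, Matrix.one_apply,
    Fintype.sum_prod_type, Finset.sum_mul, Finset.mul_sum, mul_ite, ite_mul,
    mul_zero, zero_mul, mul_one, Finset.sum_ite_eq, Finset.sum_ite_eq', Finset.mem_univ,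
    if_true]
  rw [Finset.sum_comm]
  refine Finset.sum_congr rfl fun p _ => ?_
  rw [Finset.sum_comm]
  refine Finset.sum_congr rfl fun q _ => Finset.sum_congr rfl fun a _ => by ring

lemma supAct_lK (G : Matrix N N ℂ) (A : Matrix N N ℂ) :
    supAct (G ⊗ₖ (1 : Matrix N N ℂ)) A = G * A := by
  have h := supAct_kron G 1 A
  rwa [Matrix.transpose_one, Matrix.mul_one] at h

lemma supAct_rK (G : Matrix N N ℂ) (A : Matrix N N ℂ) :
    supAct ((1 : Matrix N N ℂ) ⊗ₖ Gᵀ) A = A * G := by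
  have h := supAct_kron 1 G A
  rwa [Matrix.one_mul] at h

lemma lmat_act (W : Matrix (N × D) N ℂ) (A : Matrix N N ℂ) :
    supAct (lmat W) A = -(1 / 2 : ℂ) • (Wᴴ * W * A + A * (Wᴴ * W))
      + Wᴴ * (A ⊗ₖ (1 : Matrix D D ℂ)) * W := by
  rw [lmat, supAct_add_left, supAct_add_left, supAct_lK, supAct_rK, supAct_phiM, gM,
    Matrix.smul_mul, Matrix.mul_smul, smul_add]

lemma gM_herm (W : Matrix (N × D) N ℂ) (c : ℝ) : ((c : ℂ) • gM W).IsHermitian := by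
  rw [Matrix.IsHermitian, Matrix.conjTranspose_smul, gM, Matrix.conjTranspose_smul,
    Matrix.conjTranspose_mul, Matrix.conjTranspose_conjTranspose]
  simp [Complex.star_def, Complex.conj_ofReal, map_neg, map_div₀]

lemma supAct_exp_lr (G : Matrix N N ℂ) (A : Matrix N N ℂ) :
    supAct (exp (G ⊗ₖ (1 : Matrix N N ℂ) + (1 : Matrix N N ℂ) ⊗ₖ Gᵀ)) A
      = exp G * A * exp G := by
  have h2 : exp (G ⊗ₖ (1 : Matrix N N ℂ) + (1 : Matrix N N ℂ) ⊗ₖ Gᵀ)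
      = exp G ⊗ₖ exp Gᵀ := exp_kron_add G Gᵀ
  rw [h2, Matrix.exp_transpose, ← supAct_kron]

lemma pos_exp_lr (c : ℝ) (W : Matrix (N × D) N ℂ) {A : Matrix N N ℂ} (hA : A.PosSemidef) :
    (supAct (exp (((c : ℂ) • gM W) ⊗ₖ (1 : Matrix N N ℂ)
      + (1 : Matrix N N ℂ) ⊗ₖ ((c : ℂ) • gM W)ᵀ)) A).PosSemidef := by
  rw [supAct_exp_lr]
  have hE : (exp ((c : ℂ) • gM W)).IsHermitian := (gM_herm W c).exp
  have := hA.mul_mul_conjTranspose_same (exp ((c : ℂ) • gM W))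
  rwa [hE] at this

lemma isPos_phiM (W : Matrix (N × D) N ℂ) {A : Matrix N N ℂ} (hA : A.PosSemidef) :
    (supAct (phiM W) A).PosSemidef := by
  rw [supAct_phiM]
  exact (posSemidef_kron_one hA).conjTranspose_mul_mul_same W

lemma pos_pow_phi (W : Matrix (N × D) N ℂ) (m : ℕ) :
    ∀ A : Matrix N N ℂ, A.PosSemidef → (supAct (phiM W ^ m) A).PosSemidef := by
  induction m with
  | zero => intro A hA; simpa using hA
  | succ m ih =>
      intro A hA
      rw [pow_succ, supAct_mul]
      exact ih _ (isPos_phiM W hA)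

lemma pos_exp_phi {c : ℝ} (hc : 0 ≤ c) (W : Matrix (N × D) N ℂ) {A : Matrix N N ℂ}
    (hA : A.PosSemidef) : (supAct (exp ((c : ℂ) • phiM W)) A).PosSemidef := by
  have hs : HasSum (fun m : ℕ => ((m.factorial : ℂ))⁻¹ • ((c : ℂ) • phiM W) ^ m)
      (exp ((c : ℂ) • phiM W)) := exp_series_hasSum_exp' _
  have h2 : HasSum (fun m : ℕ => supAct (((m.factorial : ℂ))⁻¹ • ((c : ℂ) • phiM W) ^ m) A)
      (supAct (exp ((c : ℂ) • phiM W)) A) := (evalCLM A).hasSum hs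
  refine posSemidef_hasSum h2 fun m => ?_
  have key : supAct (((m.factorial : ℂ))⁻¹ • ((c : ℂ) • phiM W) ^ m) A
      = ((((m.factorial : ℝ))⁻¹ * c ^ m : ℝ) : ℂ) • supAct (phiM W ^ m) A := by
    rw [smul_pow, supAct_smul_left, supAct_smul_left, smul_smul]
    congr 1
    push_cast
    ring
  rw [key]
  exact posSemidef_smul_real (by positivity) (pos_pow_phi W m A hA)


section Trotter

variable {𝔸 : Type*} [NormedRing 𝔸] [NormedAlgebra ℂ 𝔸] [CompleteSpace 𝔸]

lemma norm_exp_remainder (x : 𝔸) : ‖exp x - 1 - x‖ ≤ ‖x‖ ^ 2 * Real.exp ‖x‖ := by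
  have hs : Summable fun m : ℕ => ((m.factorial : ℂ))⁻¹ • x ^ m := expSeries_summable' x
  have hs1 : Summable fun m : ℕ => (((m + 1).factorial : ℂ))⁻¹ • x ^ (m + 1) :=
    (summable_nat_add_iff (f := fun m : ℕ => ((m.factorial : ℂ))⁻¹ • x ^ m) 1).mpr hs
  have hshape : ∀ m : ℕ, (((m + 2).factorial : ℂ))⁻¹ • x ^ (m + 2)
      = (((m + 2).factorial : ℂ))⁻¹ • x ^ (m + 2) := by
    intro m
    have : m + 1 + 1 = m + 2 := by omega
    rw [this]
  have h0 : exp x = 1 + x + ∑' m : ℕ, (((m + 2).factorial : ℂ))⁻¹ • x ^ (m + 2) := by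
    simp only [exp_eq_tsum (𝕂 := ℂ)]
    rw [Summable.tsum_eq_zero_add hs, Summable.tsum_eq_zero_add hs1]
    rw [tsum_congr hshape]
    have e0 : ((Nat.factorial 0 : ℂ))⁻¹ • x ^ 0 = 1 := by
      norm_num [Nat.factorial]
    have e1 : ((Nat.factorial (0 + 1) : ℂ))⁻¹ • x ^ (0 + 1) = x := by
      norm_num [Nat.factorial]
    rw [e0, e1]
    abel
  have hrem : exp x - 1 - x = ∑' m : ℕ, (((m + 2).factorial : ℂ))⁻¹ • x ^ (m + 2) := by
    rw [h0]; abel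
  rw [hrem]
  have hsn : Summable fun m : ℕ => ‖(((m + 2).factorial : ℂ))⁻¹ • x ^ (m + 2)‖ := by
    have h := norm_expSeries_summable' (𝕂 := ℂ) x
    exact (summable_nat_add_iff (f := fun m : ℕ => ‖((m.factorial : ℂ))⁻¹ • x ^ m‖) 2).mpr h
  refine (norm_tsum_le_tsum_norm hsn).trans ?_
  have hterm : ∀ m : ℕ, ‖(((m + 2).factorial : ℂ))⁻¹ • x ^ (m + 2)‖
      ≤ ‖x‖ ^ 2 * (((m.factorial : ℝ))⁻¹ * ‖x‖ ^ m) := by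
    intro m
    rw [norm_smul, norm_inv]
    have h1 : ‖((m + 2).factorial : ℂ)‖ = ((m + 2).factorial : ℝ) := by
      rw [Complex.norm_natCast]
    rw [h1]
    have h2 : ‖x ^ (m + 2)‖ ≤ ‖x‖ ^ (m + 1 + 1) := norm_pow_le' x (by omega)
    have h3 : ((m + 2).factorial : ℝ)⁻¹ ≤ ((m.factorial : ℝ))⁻¹ := by
      apply inv_anti₀
      · exact_mod_cast Nat.factorial_pos m
      · exact_mod_cast Nat.factorial_le (by omega : m ≤ m + 2)
    calc ((m + 2).factorial : ℝ)⁻¹ * ‖x ^ (m + 2)‖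
        ≤ ((m.factorial : ℝ))⁻¹ * ‖x‖ ^ (m + 1 + 1) := by
          apply mul_le_mul h3 h2 (norm_nonneg _)
          positivity
      _ = ‖x‖ ^ 2 * (((m.factorial : ℝ))⁻¹ * ‖x‖ ^ m) := by ring
  have hsum2 : Summable fun m : ℕ => ‖x‖ ^ 2 * (((m.factorial : ℝ))⁻¹ * ‖x‖ ^ m) := by
    apply Summable.mul_left
    have := Real.summable_pow_div_factorial ‖x‖
    simpa [div_eq_mul_inv, mul_comm] using this
  refine (Summable.tsum_le_tsum hterm hsn hsum2).trans ?_
  rw [tsum_mul_left]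
  apply mul_le_mul_of_nonneg_left _ (by positivity)
  have hexp : Real.exp ‖x‖ = ∑' m : ℕ, ((m.factorial : ℝ))⁻¹ • ‖x‖ ^ m := by
    rw [Real.exp_eq_exp_ℝ, exp_eq_tsum (𝕂 := ℝ)]
  rw [hexp]
  apply le_of_eq
  exact tsum_congr fun m => by rw [smul_eq_mul]

lemma norm_pow_le_of_le {P : 𝔸} {D : ℝ} (h1 : ‖(1 : 𝔸)‖ ≤ 1) (hD1 : 1 ≤ D) (hP : ‖P‖ ≤ D) :
    ∀ m : ℕ, ‖P ^ m‖ ≤ D ^ m := by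
  intro m
  induction m with
  | zero => simpa using h1
  | succ m ih =>
      rw [pow_succ, pow_succ]
      exact (norm_mul_le _ _).trans (mul_le_mul ih hP (norm_nonneg _) (by positivity))

lemma pow_sub_pow_norm_le {P Q : 𝔸} {D : ℝ} (h1 : ‖(1 : 𝔸)‖ ≤ 1) (hD1 : 1 ≤ D)
    (hP : ‖P‖ ≤ D) (hQ : ‖Q‖ ≤ D) : ∀ m : ℕ, ‖P ^ m - Q ^ m‖ ≤ m * D ^ m * ‖P - Q‖ := by
  intro m
  induction m with
  | zero => simp
  | succ m ih =>
      have hiden : P ^ (m + 1) - Q ^ (m + 1) = P ^ m * (P - Q) + (P ^ m - Q ^ m) * Q := by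
        noncomm_ring
      have hD0 : (0 : ℝ) ≤ D := le_trans zero_le_one hD1
      have hDm : (0:ℝ) ≤ D ^ m := by positivity
      calc ‖P ^ (m + 1) - Q ^ (m + 1)‖ ≤ ‖P ^ m * (P - Q)‖ + ‖(P ^ m - Q ^ m) * Q‖ := by
            rw [hiden]; exact norm_add_le _ _
        _ ≤ ‖P ^ m‖ * ‖P - Q‖ + ‖P ^ m - Q ^ m‖ * ‖Q‖ :=
            add_le_add (norm_mul_le _ _) (norm_mul_le _ _)
        _ ≤ D ^ m * ‖P - Q‖ + (m * D ^ m * ‖P - Q‖) * D := by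
            apply add_le_add
            · exact mul_le_mul_of_nonneg_right (norm_pow_le_of_le h1 hD1 hP m) (norm_nonneg _)
            · exact mul_le_mul ih hQ (norm_nonneg _) (by positivity)
        _ = D ^ m * ‖P - Q‖ + m * D ^ (m + 1) * ‖P - Q‖ := by rw [pow_succ]; ring
        _ ≤ D ^ (m + 1) * ‖P - Q‖ + m * D ^ (m + 1) * ‖P - Q‖ := by
            have h2 : D ^ m ≤ D ^ (m + 1) := by
              calc D ^ m = D ^ m * 1 := by ring
                _ ≤ D ^ m * D := mul_le_mul_of_nonneg_left hD1 hDm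
                _ = D ^ (m + 1) := by rw [pow_succ]
            exact add_le_add (mul_le_mul_of_nonneg_right h2 (norm_nonneg _)) le_rfl
        _ = (m + 1 : ℕ) * D ^ (m + 1) * ‖P - Q‖ := by push_cast; ring

lemma one_add_div_pow_le {x : ℝ} (hx : 0 ≤ x) {m : ℕ} (hm : 1 ≤ m) :
    (1 + x / m) ^ m ≤ Real.exp x := by
  have hmpos : (0 : ℝ) < m := by exact_mod_cast hm
  have h1 : 1 + x / m ≤ Real.exp (x / m) := by
    have := Real.add_one_le_exp (x / m)
    linarith
  have h2 : (1 + x / m) ^ m ≤ (Real.exp (x / m)) ^ m := by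
    apply pow_le_pow_left₀ _ h1
    positivity
  refine h2.trans ?_
  rw [← Real.exp_nat_mul]
  apply le_of_eq
  congr 1
  field_simp

lemma norm_exp_le (h1 : ‖(1 : 𝔸)‖ ≤ 1) (w : 𝔸) :
    ‖exp w‖ ≤ 1 + ‖w‖ + ‖w‖ ^ 2 * Real.exp ‖w‖ := by
  have hid : exp w = 1 + w + (exp w - 1 - w) := by abel
  calc ‖exp w‖ = ‖1 + w + (exp w - 1 - w)‖ := by rw [← hid]
    _ ≤ ‖(1 : 𝔸)‖ + ‖w‖ + ‖exp w - 1 - w‖ := by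
        refine (norm_add_le _ _).trans ?_
        have := norm_add_le (1 : 𝔸) w
        linarith
    _ ≤ 1 + ‖w‖ + ‖w‖ ^ 2 * Real.exp ‖w‖ := by
        have := norm_exp_remainder w
        linarith

lemma trotter_step {u v : 𝔸} {s E : ℝ} (hu : ‖u‖ ≤ s) (hv : ‖v‖ ≤ s)
    (hs0 : 0 ≤ s) (hE : Real.exp s ≤ E) :
    ‖exp u * exp v - exp (u + v)‖
      ≤ s ^ 2 * (1 + 2 * E + 4 * E * E + 2 * s * E + s ^ 2 * E * E) := by
  have hE0 : (0 : ℝ) < E := lt_of_lt_of_le (Real.exp_pos s) hE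
  have hrem : ∀ w : 𝔸, ‖w‖ ≤ s → ‖exp w - 1 - w‖ ≤ s ^ 2 * E := by
    intro w hw
    refine (norm_exp_remainder w).trans ?_
    have h1 : ‖w‖ ^ 2 ≤ s ^ 2 := by nlinarith [norm_nonneg w]
    have h2 : Real.exp ‖w‖ ≤ E := (Real.exp_le_exp.mpr hw).trans hE
    exact mul_le_mul h1 h2 (Real.exp_pos _).le (by positivity)
  obtain ⟨Ru, hRu_eq, hRu⟩ : ∃ R, exp u = 1 + u + R ∧ ‖R‖ ≤ s ^ 2 * E :=
    ⟨exp u - 1 - u, by abel, hrem u hu⟩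
  obtain ⟨Rv, hRv_eq, hRv⟩ : ∃ R, exp v = 1 + v + R ∧ ‖R‖ ≤ s ^ 2 * E :=
    ⟨exp v - 1 - v, by abel, hrem v hv⟩
  obtain ⟨Rw, hRw_eq, hRw⟩ : ∃ R, exp (u + v) = 1 + (u + v) + R
      ∧ ‖R‖ ≤ 4 * (s ^ 2 * (E * E)) := by
    refine ⟨exp (u + v) - 1 - (u + v), by abel, ?_⟩
    refine (norm_exp_remainder (u + v)).trans ?_
    have h1 : ‖u + v‖ ≤ 2 * s := by
      have := norm_add_le u v; linarith
    have h2 : ‖u + v‖ ^ 2 ≤ 4 * s ^ 2 := by nlinarith [norm_nonneg (u + v)]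
    have h3 : Real.exp ‖u + v‖ ≤ E * E := by
      have h4 : Real.exp ‖u + v‖ ≤ Real.exp (s + s) := Real.exp_le_exp.mpr (by linarith)
      rw [Real.exp_add] at h4
      refine h4.trans ?_
      exact mul_le_mul hE hE (Real.exp_pos s).le hE0.le
    calc ‖u + v‖ ^ 2 * Real.exp ‖u + v‖ ≤ (4 * s ^ 2) * (E * E) :=
          mul_le_mul h2 h3 (Real.exp_pos _).le (by positivity)
      _ = 4 * (s ^ 2 * (E * E)) := by ring
  have hPQ : exp u * exp v - exp (u + v)
      = Rv + u * v + u * Rv + Ru + Ru * v + Ru * Rv - Rw := by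
    rw [hRu_eq, hRv_eq, hRw_eq]; noncomm_ring
  have a1 := norm_add_le (Rv : 𝔸) (u * v)
  have a2 := norm_add_le (Rv + u * v) (u * Rv)
  have a3 := norm_add_le (Rv + u * v + u * Rv) Ru
  have a4 := norm_add_le (Rv + u * v + u * Rv + Ru) (Ru * v)
  have a5 := norm_add_le (Rv + u * v + u * Rv + Ru + Ru * v) (Ru * Rv)
  have a6 := norm_sub_le (Rv + u * v + u * Rv + Ru + Ru * v + Ru * Rv) Rw
  have t2 : ‖u * v‖ ≤ s * s :=
    (norm_mul_le u v).trans (mul_le_mul hu hv (norm_nonneg v) hs0)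
  have t3 : ‖u * Rv‖ ≤ s * (s ^ 2 * E) :=
    (norm_mul_le u Rv).trans (mul_le_mul hu hRv (norm_nonneg Rv) hs0)
  have t5 : ‖Ru * v‖ ≤ (s ^ 2 * E) * s :=
    (norm_mul_le Ru v).trans (mul_le_mul hRu hv (norm_nonneg v) (by positivity))
  have t6 : ‖Ru * Rv‖ ≤ (s ^ 2 * E) * (s ^ 2 * E) :=
    (norm_mul_le Ru Rv).trans (mul_le_mul hRu hRv (norm_nonneg Rv) (by positivity))
  have total : ‖exp u * exp v - exp (u + v)‖
      ≤ s ^ 2 * E + s * s + s * (s ^ 2 * E) + s ^ 2 * E + (s ^ 2 * E) * s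
        + (s ^ 2 * E) * (s ^ 2 * E) + 4 * (s ^ 2 * (E * E)) := by
    rw [hPQ]; linarith
  refine total.trans (le_of_eq (by ring))

set_option maxHeartbeats 1600000 in
theorem trotter_formula (h1 : ‖(1 : 𝔸)‖ ≤ 1) (a b : 𝔸) :
    Tendsto (fun m : ℕ => (exp ((m : ℂ)⁻¹ • a) * exp ((m : ℂ)⁻¹ • b)) ^ m) atTop
      (𝓝 (exp (a + b))) := by
  have hr : (0 : ℝ) ≤ ‖a‖ + ‖b‖ := by positivity
  obtain ⟨r, hr_def, hr0⟩ : ∃ r, r = ‖a‖ + ‖b‖ ∧ 0 ≤ r := ⟨_, rfl, hr⟩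
  obtain ⟨E, hE_def, hE1⟩ : ∃ E, E = Real.exp r ∧ 1 ≤ E :=
    ⟨_, rfl, by have := Real.add_one_le_exp r; linarith⟩
  have hE0 : (0 : ℝ) < E := by linarith
  obtain ⟨c₀, hc0_def, hc00⟩ : ∃ c₀, c₀ = 1 + r * E + 2 * r * E * E ∧ 0 ≤ c₀ :=
    ⟨_, rfl, by positivity⟩
  obtain ⟨Cr, hCr_def, hCr0⟩ : ∃ C, C = 1 + 2 * E + 4 * E * E + 2 * r * E + r ^ 2 * E * E
      ∧ 0 ≤ C := ⟨_, rfl, by positivity⟩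
  obtain ⟨Kf, hKf_def, hKf0⟩ : ∃ K, K = (Real.exp (r * c₀)) ^ 2 * (r ^ 2 * Cr) ∧ 0 ≤ K :=
    ⟨_, rfl, by positivity⟩
  have key : ∀ᶠ m : ℕ in atTop,
      ‖(exp ((m : ℂ)⁻¹ • a) * exp ((m : ℂ)⁻¹ • b)) ^ m - exp (a + b)‖ ≤ Kf / m := by
    filter_upwards [eventually_ge_atTop 1] with m hm
    have hmpos : (0 : ℝ) < m := by exact_mod_cast hm
    have hmC : ((m : ℂ)) ≠ 0 := by
      have hm0 : m ≠ 0 := by omega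
      exact_mod_cast hm0
    obtain ⟨s, hs_def, hs0⟩ : ∃ s, s = r / m ∧ 0 ≤ s := ⟨_, rfl, by positivity⟩
    have hsr : s ≤ r := by rw [hs_def]; exact div_le_self hr0 (by exact_mod_cast hm)
    have hnormc : ‖((m : ℕ) : ℂ)⁻¹‖ = ((m : ℕ) : ℝ)⁻¹ := by
      rw [norm_inv, Complex.norm_natCast]
    have hu' : ‖(m : ℂ)⁻¹ • a‖ = ‖a‖ / m := by
      rw [norm_smul, hnormc, inv_mul_eq_div]
    have hv' : ‖(m : ℂ)⁻¹ • b‖ = ‖b‖ / m := by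
      rw [norm_smul, hnormc, inv_mul_eq_div]
    have hale : ‖a‖ ≤ r := by rw [hr_def]; linarith [norm_nonneg b]
    have hble : ‖b‖ ≤ r := by rw [hr_def]; linarith [norm_nonneg a]
    have hu : ‖(m : ℂ)⁻¹ • a‖ ≤ s := by rw [hu', hs_def]; gcongr
    have hv : ‖(m : ℂ)⁻¹ • b‖ ≤ s := by rw [hv', hs_def]; gcongr
    have hEcmp : Real.exp s ≤ E := by rw [hE_def]; exact Real.exp_le_exp.mpr hsr
    -- step bound
    have hstep := trotter_step (𝔸 := 𝔸) hu hv hs0 hEcmp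
    have hstep2 : ‖exp ((m : ℂ)⁻¹ • a) * exp ((m : ℂ)⁻¹ • b)
        - exp ((m : ℂ)⁻¹ • a + (m : ℂ)⁻¹ • b)‖ ≤ s ^ 2 * Cr := by
      refine hstep.trans ?_
      rw [hCr_def]
      have h4 : 2 * s * E ≤ 2 * r * E := by nlinarith
      have hs2r : s ^ 2 ≤ r ^ 2 := by nlinarith
      have h5 : s ^ 2 * E * E ≤ r ^ 2 * E * E :=
        mul_le_mul_of_nonneg_right (mul_le_mul_of_nonneg_right hs2r hE0.le) hE0.le
      have hinner : 1 + 2 * E + 4 * E * E + 2 * s * E + s ^ 2 * E * E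
          ≤ 1 + 2 * E + 4 * E * E + 2 * r * E + r ^ 2 * E * E := by linarith
      exact mul_le_mul_of_nonneg_left hinner (sq_nonneg s)
    -- Q^m = exp (a+b)
    have hQm : (exp ((m : ℂ)⁻¹ • a + (m : ℂ)⁻¹ • b)) ^ m = exp (a + b) := by
      letI : NormedAlgebra ℚ 𝔸 := NormedAlgebra.restrictScalars ℚ ℂ 𝔸
      rw [← NormedSpace.exp_nsmul]
      congr 1
      rw [← smul_add, ← Nat.cast_smul_eq_nsmul ℂ m, smul_smul, mul_inv_cancel₀ hmC, one_smul]
    -- norm bounds for P and Q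
    have hbase : ∀ w : 𝔸, ‖w‖ ≤ s → ‖exp w‖ ≤ 1 + s * c₀ := by
      intro w hw
      refine (norm_exp_le h1 w).trans ?_
      have h2 : Real.exp ‖w‖ ≤ E := by
        rw [hE_def]; exact Real.exp_le_exp.mpr (hw.trans hsr)
      have h3 : ‖w‖ ^ 2 * Real.exp ‖w‖ ≤ s ^ 2 * E :=
        mul_le_mul (by nlinarith [norm_nonneg w]) h2 (Real.exp_pos _).le (by positivity)
      have h4 : s ^ 2 * E ≤ s * (r * E) := by
        calc s ^ 2 * E = s * (s * E) := by ring
          _ ≤ s * (r * E) :=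
            mul_le_mul_of_nonneg_left (mul_le_mul_of_nonneg_right hsr hE0.le) hs0
      rw [hc0_def]
      nlinarith [norm_nonneg w, mul_nonneg (mul_nonneg hs0 hr0) (mul_nonneg hE0.le hE0.le),
        mul_nonneg hs0 (mul_nonneg (mul_nonneg hr0 hE0.le) hE0.le)]
    have hPle : ‖exp ((m : ℂ)⁻¹ • a) * exp ((m : ℂ)⁻¹ • b)‖ ≤ (1 + s * c₀) ^ 2 := by
      refine (norm_mul_le _ _).trans ?_
      have hsc0 : (0:ℝ) ≤ s * c₀ := mul_nonneg hs0 hc00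
      have := mul_le_mul (hbase _ hu) (hbase _ hv) (norm_nonneg _) (by linarith)
      nlinarith [this]
    have hQle : ‖exp ((m : ℂ)⁻¹ • a + (m : ℂ)⁻¹ • b)‖ ≤ (1 + s * c₀) ^ 2 := by
      have h5 : ‖(m : ℂ)⁻¹ • a + (m : ℂ)⁻¹ • b‖ ≤ 2 * s := by
        have := norm_add_le ((m : ℂ)⁻¹ • a) ((m : ℂ)⁻¹ • b); linarith
      have h6 : Real.exp ‖(m : ℂ)⁻¹ • a + (m : ℂ)⁻¹ • b‖ ≤ E * E := by
        have h7 : Real.exp ‖(m : ℂ)⁻¹ • a + (m : ℂ)⁻¹ • b‖ ≤ Real.exp (s + s) :=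
          Real.exp_le_exp.mpr (by linarith)
        rw [Real.exp_add] at h7
        exact h7.trans (mul_le_mul hEcmp hEcmp (Real.exp_pos s).le hE0.le)
      have h8 : ‖(m : ℂ)⁻¹ • a + (m : ℂ)⁻¹ • b‖ ^ 2 ≤ 4 * s ^ 2 := by
        nlinarith [norm_nonneg ((m : ℂ)⁻¹ • a + (m : ℂ)⁻¹ • b)]
      have h9 : ‖(m : ℂ)⁻¹ • a + (m : ℂ)⁻¹ • b‖ ^ 2
          * Real.exp ‖(m : ℂ)⁻¹ • a + (m : ℂ)⁻¹ • b‖ ≤ 4 * s ^ 2 * (E * E) :=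
        mul_le_mul h8 h6 (Real.exp_pos _).le (by positivity)
      have h10 : 4 * s ^ 2 * (E * E) ≤ s * (4 * r * E * E) := by
        have hin : s * E * E ≤ r * E * E :=
          mul_le_mul_of_nonneg_right (mul_le_mul_of_nonneg_right hsr hE0.le) hE0.le
        have := mul_le_mul_of_nonneg_left hin hs0
        nlinarith [this]
      refine (norm_exp_le h1 _).trans ?_
      have h11 : 1 + ‖(m : ℂ)⁻¹ • a + (m : ℂ)⁻¹ • b‖
          + ‖(m : ℂ)⁻¹ • a + (m : ℂ)⁻¹ • b‖ ^ 2
            * Real.exp ‖(m : ℂ)⁻¹ • a + (m : ℂ)⁻¹ • b‖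
          ≤ 1 + 2 * s + s * (4 * r * E * E) := by linarith
      refine h11.trans ?_
      rw [hc0_def]
      nlinarith [mul_nonneg hs0 (mul_nonneg hr0 hE0.le),
        sq_nonneg (s * (1 + r * E + 2 * r * E * E)), mul_nonneg hs0 hr0]
    have hD1 : (1 : ℝ) ≤ (1 + s * c₀) ^ 2 := by nlinarith [mul_nonneg hs0 hc00]
    have hDm : ((1 + s * c₀) ^ 2) ^ m ≤ (Real.exp (r * c₀)) ^ 2 := by
      rw [← pow_mul, mul_comm 2 m, pow_mul]
      have hbase2 : (1 + s * c₀) ^ m ≤ Real.exp (r * c₀) := by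
        have hsc : s * c₀ = (r * c₀) / m := by rw [hs_def]; ring
        rw [hsc]
        exact one_add_div_pow_le (mul_nonneg hr0 hc00) hm
      exact pow_le_pow_left₀
        (pow_nonneg (by linarith [mul_nonneg hs0 hc00] : (0:ℝ) ≤ 1 + s * c₀) m) hbase2 2
    have hmain := pow_sub_pow_norm_le h1 hD1 hPle hQle m
    rw [hQm] at hmain
    refine hmain.trans ?_
    have hfinal : (m : ℝ) * ((1 + s * c₀) ^ 2) ^ m
        * ‖exp ((m : ℂ)⁻¹ • a) * exp ((m : ℂ)⁻¹ • b)
            - exp ((m : ℂ)⁻¹ • a + (m : ℂ)⁻¹ • b)‖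
        ≤ (m : ℝ) * (Real.exp (r * c₀)) ^ 2 * (s ^ 2 * Cr) := by
      have e1 : (0:ℝ) ≤ (m : ℝ) * ((1 + s * c₀) ^ 2) ^ m := by positivity
      calc (m : ℝ) * ((1 + s * c₀) ^ 2) ^ m * ‖_ - _‖
          ≤ (m : ℝ) * ((1 + s * c₀) ^ 2) ^ m * (s ^ 2 * Cr) :=
            mul_le_mul_of_nonneg_left hstep2 e1
        _ ≤ (m : ℝ) * (Real.exp (r * c₀)) ^ 2 * (s ^ 2 * Cr) := by
            have hmono := mul_le_mul_of_nonneg_left hDm (le_of_lt hmpos)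
            have h2 : (0:ℝ) ≤ s ^ 2 * Cr := by positivity
            exact mul_le_mul_of_nonneg_right hmono h2
    refine hfinal.trans (le_of_eq ?_)
    rw [hKf_def, hs_def, div_pow]
    field_simp
  have hnorm0 : Tendsto
      (fun m : ℕ => ‖(exp ((m : ℂ)⁻¹ • a) * exp ((m : ℂ)⁻¹ • b)) ^ m - exp (a + b)‖)
      atTop (𝓝 0) :=
    squeeze_zero' (Filter.Eventually.of_forall fun m => norm_nonneg _) key
      (tendsto_const_div_atTop_nhds_zero_nat Kf)
  have h2 : Tendsto
      (fun m : ℕ => (exp ((m : ℂ)⁻¹ • a) * exp ((m : ℂ)⁻¹ • b)) ^ m - exp (a + b))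
      atTop (𝓝 0) := tendsto_zero_iff_norm_tendsto_zero.mpr hnorm0
  have h3 := h2.add (tendsto_const_nhds (x := exp (a + b)))
  simpa using h3


end Trotter

lemma matrix_norm_one_le (p : Type*) [Fintype p] [DecidableEq p] :
    ‖(1 : Matrix p p ℂ)‖ ≤ 1 := by
  cases isEmpty_or_nonempty p with
  | inl h =>
      have h0 : (1 : Matrix p p ℂ) = 0 := by
        ext i j; exact isEmptyElim i
      rw [h0, norm_zero]; exact zero_le_one
  | inr h => exact le_of_eq norm_one

/-- Core positivity: the Lindblad semigroup is positivity preserving. -/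
theorem lindblad_pos (W : Matrix (N × D) N ℂ) {t : ℝ} (ht : 0 ≤ t)
    {A : Matrix N N ℂ} (hA : A.PosSemidef) :
    (supAct (exp ((t : ℂ) • lmat W)) A).PosSemidef := by
  obtain ⟨a, ha_def⟩ : ∃ a, a = (t : ℂ) • (gM W ⊗ₖ (1 : Matrix N N ℂ)
      + (1 : Matrix N N ℂ) ⊗ₖ (gM W)ᵀ) := ⟨_, rfl⟩
  obtain ⟨b, hb_def⟩ : ∃ b, b = (t : ℂ) • phiM W := ⟨_, rfl⟩
  have hab : (t : ℂ) • lmat W = a + b := by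
    rw [ha_def, hb_def, lmat, ← smul_add]
  rw [hab]
  have htrot := trotter_formula (𝔸 := Matrix ((N × N)) ((N × N)) ℂ)
    (matrix_norm_one_le _) a b
  have hev : Tendsto
      (fun m : ℕ => supAct ((exp ((m : ℂ)⁻¹ • a) * exp ((m : ℂ)⁻¹ • b)) ^ m) A)
      atTop (𝓝 (supAct (exp (a + b)) A)) :=
    (((evalCLM A).continuous.tendsto _).comp htrot)
  refine posSemidef_of_tendsto hev ?_
  filter_upwards [eventually_ge_atTop 1] with m hm
  have hmR : ((m : ℝ)) ≠ 0 := by positivity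
  have hca : (m : ℂ)⁻¹ • a = (((t / m : ℝ)) : ℂ) • (gM W ⊗ₖ (1 : Matrix N N ℂ)
      + (1 : Matrix N N ℂ) ⊗ₖ (gM W)ᵀ) := by
    rw [ha_def, smul_smul]
    congr 1
    push_cast
    ring
  have hcb : (m : ℂ)⁻¹ • b = (((t / m : ℝ)) : ℂ) • phiM W := by
    rw [hb_def, smul_smul]
    congr 1
    push_cast
    ring
  have hsplit : (((t / m : ℝ)) : ℂ) • (gM W ⊗ₖ (1 : Matrix N N ℂ)
        + (1 : Matrix N N ℂ) ⊗ₖ (gM W)ᵀ)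
      = ((((t / m : ℝ)) : ℂ) • gM W) ⊗ₖ (1 : Matrix N N ℂ)
        + (1 : Matrix N N ℂ) ⊗ₖ ((((t / m : ℝ)) : ℂ) • gM W)ᵀ := by
    rw [smul_add, ← Matrix.smul_kronecker, ← Matrix.kronecker_smul, ← Matrix.transpose_smul]
  have htm : (0 : ℝ) ≤ t / m := by positivity
  have hpos : ∀ (j : ℕ) (B : Matrix N N ℂ), B.PosSemidef →
      (supAct ((exp ((m : ℂ)⁻¹ • a) * exp ((m : ℂ)⁻¹ • b)) ^ j) B).PosSemidef := by
    intro j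
    induction j with
    | zero => intro B hB; simpa using hB
    | succ j ih =>
        intro B hB
        rw [pow_succ, supAct_mul, supAct_mul]
        apply ih
        have h1 : (supAct (exp ((m : ℂ)⁻¹ • b)) B).PosSemidef := by
          rw [hcb]; exact pos_exp_phi htm W hB
        rw [hca, hsplit]
        exact pos_exp_lr (t / m) W h1
  exact hpos m A hA

/-- Unitality of the semigroup when the generator kills `1`. -/
lemma supAct_exp_one {X : Matrix (N × N) (N × N) ℂ} (hX : supAct X (1 : Matrix N N ℂ) = 0) :
    supAct (exp X) (1 : Matrix N N ℂ) = 1 := by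
  have hn : ∀ j : ℕ, j ≠ 0 → supAct (X ^ j) (1 : Matrix N N ℂ) = 0 := by
    intro j hj
    obtain ⟨i, rfl⟩ := Nat.exists_eq_succ_of_ne_zero hj
    induction i with
    | zero => simpa using hX
    | succ i _ => rw [pow_succ, supAct_mul, hX, supAct_zero_right]
  have hs : Summable fun j : ℕ => ((j.factorial : ℂ))⁻¹ • X ^ j := expSeries_summable' X
  simp only [exp_eq_tsum (𝕂 := ℂ)]
  rw [show supAct (∑' j : ℕ, ((j.factorial : ℂ))⁻¹ • X ^ j) (1 : Matrix N N ℂ)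
      = evalCLM (1 : Matrix N N ℂ) (∑' j : ℕ, ((j.factorial : ℂ))⁻¹ • X ^ j) from rfl]
  rw [ContinuousLinearMap.map_tsum (evalCLM (1 : Matrix N N ℂ)) hs]
  rw [tsum_eq_single 0 (by
    intro j hj
    simp only [evalCLM_apply, supAct_smul_left, hn j hj, smul_zero])]
  simp


/-- Ampliated matrix `G ⊗ 1ₖ` on index `N × k`. -/
def ampG (k : Type*) [Fintype k] [DecidableEq k] (G : Matrix N N ℂ) :
    Matrix (N × k) (N × k) ℂ :=
  Matrix.of fun x y => G x.1 y.1 * (if x.2 = y.2 then 1 else 0)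

/-- Ampliated Lindblad operator. -/
def ampW (k : Type*) [Fintype k] [DecidableEq k] (W : Matrix (N × D) N ℂ) :
    Matrix ((N × k) × D) (N × k) ℂ :=
  Matrix.of fun x y => W (x.1.1, x.2) y.1 * (if x.1.2 = y.2 then 1 else 0)

/-- Ampliated supermatrix. -/
def ampMat (k : Type*) [Fintype k] [DecidableEq k] (X : Matrix (N × N) (N × N) ℂ) :
    Matrix ((N × k) × (N × k)) ((N × k) × (N × k)) ℂ :=
  Matrix.of fun x y => X (x.1.1, x.2.1) (y.1.1, y.2.1)
    * ((if x.1.2 = y.1.2 then 1 else 0) * (if x.2.2 = y.2.2 then 1 else 0))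

lemma amp_supAct (X : Matrix (N × N) (N × N) ℂ) (M : Matrix (N × k) (N × k) ℂ) :
    amp (supAct X) M = supAct (ampMat k X) M := by
  ext ⟨i, c⟩ ⟨j, e⟩
  simp only [amp, supAct, ampMat, Matrix.of_apply, Fintype.sum_prod_type]
  simp [mul_ite, ite_mul, mul_zero, zero_mul, mul_one, one_mul, Finset.sum_ite_eq,
    Finset.sum_ite_eq']

lemma ampMat_one : ampMat k (1 : Matrix (N × N) (N × N) ℂ) = 1 := by
  ext ⟨⟨i, c⟩, ⟨j, e⟩⟩ ⟨⟨p, c'⟩, ⟨q, e'⟩⟩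
  simp only [ampMat, Matrix.of_apply, Matrix.one_apply, Prod.mk.injEq]
  by_cases h1 : i = p <;> by_cases h2 : j = q <;> by_cases h3 : c = c' <;>
    by_cases h4 : e = e' <;> simp [h1, h2, h3, h4, Prod.ext_iff]

lemma ampMat_mul (X Y : Matrix (N × N) (N × N) ℂ) :
    ampMat k (X * Y) = ampMat k X * ampMat k Y := by
  ext ⟨⟨i, c⟩, ⟨j, e⟩⟩ ⟨⟨p, c'⟩, ⟨q, e'⟩⟩
  simp only [ampMat, Matrix.of_apply, Matrix.mul_apply, Fintype.sum_prod_type]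
  by_cases h3 : c = c' <;> by_cases h4 : e = e' <;>
    simp [h3, h4, mul_ite, ite_mul, mul_zero, zero_mul, mul_one, one_mul, Finset.sum_ite_eq,
      Finset.sum_ite_eq', Finset.mul_sum, Finset.sum_mul]

/-- `ampMat` as a linear map. -/
def ampMatL (k : Type*) [Fintype k] [DecidableEq k] :
    Matrix (N × N) (N × N) ℂ →ₗ[ℂ] Matrix ((N × k) × (N × k)) ((N × k) × (N × k)) ℂ where
  toFun := ampMat k
  map_add' X Y := by
    ext x y
    simp only [ampMat, Matrix.of_apply, Matrix.add_apply, add_mul, mul_ite, ite_mul,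
      mul_zero, zero_mul, mul_one, one_mul]
    by_cases h1 : x.2.2 = y.2.2 <;> by_cases h2 : x.1.2 = y.1.2 <;> simp [h1, h2]
  map_smul' c X := by
    ext x y
    simp [ampMat, mul_assoc]

lemma ampMat_pow (X : Matrix (N × N) (N × N) ℂ) (m : ℕ) :
    ampMat k (X ^ m) = (ampMat k X) ^ m := by
  induction m with
  | zero => simpa using ampMat_one
  | succ m ih => rw [pow_succ, pow_succ, ampMat_mul, ih]

lemma ampMat_exp (X : Matrix (N × N) (N × N) ℂ) :
    ampMat k (exp X) = exp (ampMat k X) :=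
  map_exp_pow (ampMatL k) X (fun m => ampMat_pow X m)

lemma ampW_conjTranspose_mul (W : Matrix (N × D) N ℂ) :
    (ampW k W)ᴴ * ampW k W = ampG k (Wᴴ * W) := by
  ext ⟨i, c⟩ ⟨j, e⟩
  simp only [ampW, ampG, Matrix.conjTranspose_apply, Matrix.mul_apply, Matrix.of_apply,
    Fintype.sum_prod_type]
  by_cases h : c = e <;>
    simp [h, eq_comm, star_mul', apply_ite (starRingEnd ℂ), mul_ite, ite_mul, mul_zero,
      zero_mul, mul_one, one_mul, Finset.sum_ite_eq, Finset.sum_ite_eq']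

lemma ampG_gM (W : Matrix (N × D) N ℂ) : gM (ampW k W) = ampG k (gM W) := by
  rw [gM, ampW_conjTranspose_mul, gM]
  ext ⟨i, c⟩ ⟨j, e⟩
  simp [ampG, mul_assoc, mul_comm, mul_left_comm]

lemma ampMat_lK (G : Matrix N N ℂ) :
    ampMat k (G ⊗ₖ (1 : Matrix N N ℂ)) = ampG k G ⊗ₖ (1 : Matrix (N × k) (N × k) ℂ) := by
  ext ⟨⟨i, c⟩, ⟨j, e⟩⟩ ⟨⟨p, c'⟩, ⟨q, e'⟩⟩
  simp only [ampMat, ampG, Matrix.kroneckerMap_apply, Matrix.of_apply, Matrix.one_apply,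
    Prod.mk.injEq]
  by_cases h1 : j = q <;> by_cases h3 : c = c' <;> by_cases h4 : e = e' <;>
    simp [h1, h3, h4, Prod.ext_iff]

lemma ampMat_rK (G : Matrix N N ℂ) :
    ampMat k ((1 : Matrix N N ℂ) ⊗ₖ Gᵀ)
      = (1 : Matrix (N × k) (N × k) ℂ) ⊗ₖ (ampG k G)ᵀ := by
  ext ⟨⟨i, c⟩, ⟨j, e⟩⟩ ⟨⟨p, c'⟩, ⟨q, e'⟩⟩
  simp only [ampMat, ampG, Matrix.kroneckerMap_apply, Matrix.of_apply, Matrix.one_apply,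
    Matrix.transpose_apply, Prod.mk.injEq]
  by_cases h1 : i = p <;> by_cases h3 : c = c' <;> by_cases h4 : e = e' <;>
    simp [h1, h3, h4, Prod.ext_iff, eq_comm]

lemma ampMat_phiM (W : Matrix (N × D) N ℂ) :
    ampMat k (phiM W) = phiM (ampW k W) := by
  ext ⟨⟨i, c⟩, ⟨j, e⟩⟩ ⟨⟨p, c'⟩, ⟨q, e'⟩⟩
  simp only [ampMat, phiM, ampW, Matrix.of_apply]
  by_cases h3 : c = c' <;> by_cases h4 : e = e' <;>
    simp [h3, h4, eq_comm, star_mul', apply_ite (starRingEnd ℂ), mul_ite, ite_mul, mul_zero,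
      zero_mul, mul_one, one_mul, Finset.mul_sum, Finset.sum_mul]

lemma ampMat_lmat (W : Matrix (N × D) N ℂ) :
    ampMat k (lmat W) = lmat (ampW k W) := by
  have hadd : ∀ X Y : Matrix (N × N) (N × N) ℂ,
      ampMat k (X + Y) = ampMat k X + ampMat k Y := fun X Y => (ampMatL k).map_add X Y
  rw [lmat, hadd, hadd, ampMat_lK, ampMat_rK, ampMat_phiM, lmat, ampG_gM]

end LindbladAux

open LindbladAux in
/-- If `ν K = (K⊗1 + 1⊗Y)ν` then `M(A) = −½{ν*ν, A} + ν*(A⊗1)ν` generates a `K`-invariant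
Markov completely positive semigroup; in particular `ν*ν` commutes with `K`. -/
theorem lindblad_intertwining_kinvariant {n d : ℕ}
    (K : Matrix (Fin n) (Fin n) ℂ) (hK : K.IsHermitian)
    (Y : Matrix (Fin d) (Fin d) ℂ) (hY : Y.IsHermitian)
    (ν : Matrix (Fin n × Fin d) (Fin n) ℂ)
    (hint : ν * K = (K ⊗ₖ (1 : Matrix (Fin d) (Fin d) ℂ)
        + (1 : Matrix (Fin n) (Fin n) ℂ) ⊗ₖ Y) * ν)
    (L : Matrix (Fin n × Fin n) (Fin n × Fin n) ℂ)
    (hL : ∀ A : Matrix (Fin n) (Fin n) ℂ,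
      supAct L A = -(1 / 2 : ℂ) • (νᴴ * ν * A + A * (νᴴ * ν))
        + νᴴ * (A ⊗ₖ (1 : Matrix (Fin d) (Fin d) ℂ)) * ν) :
    (νᴴ * ν * K = K * (νᴴ * ν)) ∧
    (∀ t : ℝ, 0 ≤ t → IsCP (supAct (NormedSpace.exp ((t : ℂ) • L))) ∧
        supAct (NormedSpace.exp ((t : ℂ) • L)) 1 = 1) ∧
    (∀ (t : ℝ) (A : Matrix (Fin n) (Fin n) ℂ),
      supAct L (NormedSpace.exp ((Complex.I * (t : ℂ)) • K) * A *
          NormedSpace.exp ((-(Complex.I * (t : ℂ))) • K))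
        = NormedSpace.exp ((Complex.I * (t : ℂ)) • K) * supAct L A *
            NormedSpace.exp ((-(Complex.I * (t : ℂ))) • K)) := by
  classical
  have hadj : νᴴ * (K ⊗ₖ (1 : Matrix (Fin d) (Fin d) ℂ)
      + (1 : Matrix (Fin n) (Fin n) ℂ) ⊗ₖ Y) = K * νᴴ := by
    have h := congrArg Matrix.conjTranspose hint
    rw [Matrix.conjTranspose_mul, Matrix.conjTranspose_mul, Matrix.conjTranspose_add,
      LindbladAux.kron_conjTranspose, LindbladAux.kron_conjTranspose, Matrix.conjTranspose_one,
      Matrix.conjTranspose_one, hK.eq, hY.eq] at h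
    exact h.symm
  have part1 : νᴴ * ν * K = K * (νᴴ * ν) := by
    calc νᴴ * ν * K = νᴴ * (ν * K) := by rw [Matrix.mul_assoc]
      _ = νᴴ * ((K ⊗ₖ (1 : Matrix (Fin d) (Fin d) ℂ)
            + (1 : Matrix (Fin n) (Fin n) ℂ) ⊗ₖ Y) * ν) := by rw [hint]
      _ = (νᴴ * (K ⊗ₖ (1 : Matrix (Fin d) (Fin d) ℂ)
            + (1 : Matrix (Fin n) (Fin n) ℂ) ⊗ₖ Y)) * ν := by rw [Matrix.mul_assoc]
      _ = (K * νᴴ) * ν := by rw [hadj]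
      _ = K * (νᴴ * ν) := by rw [Matrix.mul_assoc]
  have hLeq : L = LindbladAux.lmat ν := LindbladAux.supAct_ext fun A => by
    rw [hL, LindbladAux.lmat_act]
  refine ⟨part1, ?_, ?_⟩
  · intro t ht
    constructor
    · intro k M hM
      rw [LindbladAux.amp_supAct]
      have h1 : LindbladAux.ampMat (Fin k) (NormedSpace.exp ((t : ℂ) • L))
          = NormedSpace.exp ((t : ℂ) • LindbladAux.lmat (LindbladAux.ampW (Fin k) ν)) := by
        rw [LindbladAux.ampMat_exp]
        congr 1
        rw [show LindbladAux.ampMat (Fin k) ((t : ℂ) • L)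
            = (t : ℂ) • LindbladAux.ampMat (Fin k) L from
          (LindbladAux.ampMatL (Fin k)).map_smul _ _, hLeq, LindbladAux.ampMat_lmat]
      rw [h1]
      exact LindbladAux.lindblad_pos _ ht hM
    · apply LindbladAux.supAct_exp_one
      rw [LindbladAux.supAct_smul_left, hL]
      rw [Matrix.mul_one, Matrix.one_mul, Matrix.one_kronecker_one, Matrix.mul_one]
      rw [show -(1 / 2 : ℂ) • (νᴴ * ν + νᴴ * ν) + νᴴ * ν = 0 from by module]
      rw [smul_zero]
  · intro t A
    set c : ℂ := Complex.I * (t : ℂ) with hc_def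
    set H := K ⊗ₖ (1 : Matrix (Fin d) (Fin d) ℂ)
      + (1 : Matrix (Fin n) (Fin n) ℂ) ⊗ₖ Y with hH_def
    have f1 : ∀ e : ℂ, ν * NormedSpace.exp (e • K) = NormedSpace.exp (e • H) * ν :=
      fun e => LindbladAux.mul_exp_of_intertwine ν (e • K) (e • H)
        (by rw [Matrix.mul_smul, hint, Matrix.smul_mul])
    have f2 : ∀ e : ℂ, νᴴ * NormedSpace.exp (e • H) = NormedSpace.exp (e • K) * νᴴ :=
      fun e => LindbladAux.mul_exp_of_intertwine νᴴ (e • H) (e • K)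
        (by rw [Matrix.mul_smul, hadj, Matrix.smul_mul])
    have fc : ∀ e : ℂ, (νᴴ * ν) * NormedSpace.exp (e • K)
        = NormedSpace.exp (e • K) * (νᴴ * ν) :=
      fun e => LindbladAux.mul_exp_of_intertwine (νᴴ * ν) (e • K) (e • K)
        (by rw [Matrix.mul_smul, part1, Matrix.smul_mul])
    have f3 : ∀ e : ℂ, NormedSpace.exp (e • H)
        = NormedSpace.exp (e • K) ⊗ₖ NormedSpace.exp (e • Y) := by
      intro e
      have h : e • H = (e • K) ⊗ₖ (1 : Matrix (Fin d) (Fin d) ℂ)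
          + (1 : Matrix (Fin n) (Fin n) ℂ) ⊗ₖ (e • Y) := by
        rw [hH_def, smul_add, ← Matrix.smul_kronecker, ← Matrix.kronecker_smul]
      rw [h, LindbladAux.exp_kron_add]
    have f4 : ∀ e : ℂ, NormedSpace.exp (e • Y) * NormedSpace.exp ((-e) • Y) = 1 := by
      intro e
      have hcom : Commute (e • Y) ((-e) • Y) := by
        unfold Commute SemiconjBy
        rw [Matrix.smul_mul, Matrix.mul_smul, Matrix.smul_mul, Matrix.mul_smul,
          smul_smul, smul_smul, mul_comm e (-e)]
      rw [← Matrix.exp_add_of_commute _ _ hcom, neg_smul, add_neg_cancel,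
        NormedSpace.exp_zero]
    have f4' : ∀ e : ℂ, NormedSpace.exp ((-e) • Y) * NormedSpace.exp (e • Y) = 1 := by
      intro e
      have := f4 (-e)
      rwa [neg_neg] at this
    set U := NormedSpace.exp (c • K) with hU_def
    set U' := NormedSpace.exp ((-c) • K) with hU'_def
    have e2 : U ⊗ₖ (1 : Matrix (Fin d) (Fin d) ℂ)
        = NormedSpace.exp (c • H)
          * ((1 : Matrix (Fin n) (Fin n) ℂ) ⊗ₖ NormedSpace.exp ((-c) • Y)) := by
      rw [f3 c, ← Matrix.mul_kronecker_mul, Matrix.mul_one, f4 c]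
    have e3 : U' ⊗ₖ (1 : Matrix (Fin d) (Fin d) ℂ)
        = ((1 : Matrix (Fin n) (Fin n) ℂ) ⊗ₖ NormedSpace.exp (c • Y))
          * NormedSpace.exp ((-c) • H) := by
      rw [f3 (-c), ← Matrix.mul_kronecker_mul, Matrix.one_mul, f4 c]
    have e4 : ((1 : Matrix (Fin n) (Fin n) ℂ) ⊗ₖ NormedSpace.exp ((-c) • Y))
        * (A ⊗ₖ (1 : Matrix (Fin d) (Fin d) ℂ))
        * ((1 : Matrix (Fin n) (Fin n) ℂ) ⊗ₖ NormedSpace.exp (c • Y))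
        = A ⊗ₖ (1 : Matrix (Fin d) (Fin d) ℂ) := by
      rw [← Matrix.mul_kronecker_mul, Matrix.one_mul, Matrix.mul_one,
        ← Matrix.mul_kronecker_mul, Matrix.mul_one, f4' c]
    have main : (U * A * U') ⊗ₖ (1 : Matrix (Fin d) (Fin d) ℂ)
        = NormedSpace.exp (c • H) * (A ⊗ₖ (1 : Matrix (Fin d) (Fin d) ℂ))
          * NormedSpace.exp ((-c) • H) := by
      calc (U * A * U') ⊗ₖ (1 : Matrix (Fin d) (Fin d) ℂ)
          = ((U ⊗ₖ (1 : Matrix (Fin d) (Fin d) ℂ))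
            * (A ⊗ₖ (1 : Matrix (Fin d) (Fin d) ℂ)))
            * (U' ⊗ₖ (1 : Matrix (Fin d) (Fin d) ℂ)) := by
            rw [show (U ⊗ₖ (1 : Matrix (Fin d) (Fin d) ℂ))
                  * (A ⊗ₖ (1 : Matrix (Fin d) (Fin d) ℂ))
                  * (U' ⊗ₖ (1 : Matrix (Fin d) (Fin d) ℂ))
                = (U * A * U') ⊗ₖ ((1 : Matrix (Fin d) (Fin d) ℂ) * 1 * 1) from by
              rw [← Matrix.mul_kronecker_mul, ← Matrix.mul_kronecker_mul]]
            rw [Matrix.mul_one, Matrix.mul_one]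
        _ = NormedSpace.exp (c • H)
            * (((1 : Matrix (Fin n) (Fin n) ℂ) ⊗ₖ NormedSpace.exp ((-c) • Y))
              * (A ⊗ₖ (1 : Matrix (Fin d) (Fin d) ℂ))
              * ((1 : Matrix (Fin n) (Fin n) ℂ) ⊗ₖ NormedSpace.exp (c • Y)))
            * NormedSpace.exp ((-c) • H) := by
            rw [e2, e3]
            simp only [Matrix.mul_assoc]
        _ = NormedSpace.exp (c • H) * (A ⊗ₖ (1 : Matrix (Fin d) (Fin d) ℂ))
            * NormedSpace.exp ((-c) • H) := by rw [e4]
    have goal2 : νᴴ * ((U * A * U') ⊗ₖ (1 : Matrix (Fin d) (Fin d) ℂ)) * ν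
        = U * (νᴴ * (A ⊗ₖ (1 : Matrix (Fin d) (Fin d) ℂ)) * ν) * U' := by
      rw [main]
      calc νᴴ * (NormedSpace.exp (c • H) * (A ⊗ₖ (1 : Matrix (Fin d) (Fin d) ℂ))
            * NormedSpace.exp ((-c) • H)) * ν
          = (νᴴ * NormedSpace.exp (c • H)) * ((A ⊗ₖ (1 : Matrix (Fin d) (Fin d) ℂ))
            * (NormedSpace.exp ((-c) • H) * ν)) := by simp only [Matrix.mul_assoc]
        _ = (U * νᴴ) * ((A ⊗ₖ (1 : Matrix (Fin d) (Fin d) ℂ)) * (ν * U')) := by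
            rw [f2 c, ← f1 (-c)]
        _ = U * (νᴴ * (A ⊗ₖ (1 : Matrix (Fin d) (Fin d) ℂ)) * ν) * U' := by
            simp only [Matrix.mul_assoc]
    have goal1l : νᴴ * ν * (U * A * U') = U * (νᴴ * ν * A) * U' := by
      calc νᴴ * ν * (U * A * U') = ((νᴴ * ν) * U) * (A * U') := by
            simp only [Matrix.mul_assoc]
        _ = (U * (νᴴ * ν)) * (A * U') := by rw [fc c]
        _ = U * (νᴴ * ν * A) * U' := by simp only [Matrix.mul_assoc]
    have goal1r : (U * A * U') * (νᴴ * ν) = U * (A * (νᴴ * ν)) * U' := by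
      calc (U * A * U') * (νᴴ * ν) = U * (A * (U' * (νᴴ * ν))) := by
            simp only [Matrix.mul_assoc]
        _ = U * (A * ((νᴴ * ν) * U')) := by rw [← fc (-c)]
        _ = U * (A * (νᴴ * ν)) * U' := by simp only [Matrix.mul_assoc]
    rw [hL, hL, goal1l, goal1r, goal2]
    simp only [Matrix.mul_add, Matrix.add_mul, Matrix.mul_smul, Matrix.smul_mul, smul_add,
      Matrix.mul_assoc]
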